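/- arXiv:1405.6312 — 2 statements merged into one kernel-verified Lean document; each statement's English description precedes it below -/
import Mathlib

section
/- Let B be a standard one-dimensional Brownian motion started at 0, regarded as a random element of C[0,1]. For every c > √2, almost surely there exists h₀ > 0 such that for all h ∈ (0, h₀) and all t ∈ [0, 1−h], |B(t+h) − B(t)| < c·√(h·log(1/h)). -/
open MeasureTheory ProbabilityTheory Set

/-- A standard one-dimensional Brownian motion started at 0 on the probability
space `(Ω, P)`: `B 0 = 0` a.s., independent increments, Gaussian increments
`B (t+h) - B t ~ N(0, h)`, and a.s. continuous paths on `[0, ∞)`. -/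
structure IsStdBM {Ω : Type} [MeasurableSpace Ω] (P : Measure Ω) (B : ℝ → Ω → ℝ) : Prop where
  isProb : IsProbabilityMeasure P
  meas : ∀ t : ℝ, Measurable (B t)
  start : ∀ᵐ ω ∂P, B 0 ω = 0
  indepIncr : ∀ (n : ℕ) (t : Fin (n + 1) → ℝ), Monotone t → (∀ i, 0 ≤ t i) →
    iIndepFun
      (fun (i : Fin n) => fun ω => B (t i.succ) ω - B (t i.castSucc) ω) P
  gaussIncr : ∀ t h : ℝ, 0 ≤ t → 0 < h →
    P.map (fun ω => B (t + h) ω - B t ω) = gaussianReal 0 h.toNNReal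
  cont : ∀ᵐ ω ∂P, ContinuousOn (fun t => B t ω) (Ici 0)


set_option maxHeartbeats 1000000

open Filter

section AuxLevy

lemma gauss_abs_tail (v : NNReal) (hv : v ≠ 0) (a : ℝ) (ha : 0 ≤ a) :
    gaussianReal 0 v {x : ℝ | a ≤ |x|} ≤ ENNReal.ofReal (2 * Real.exp (-a^2/(2*v))) := by
  have hvpos : (0:ℝ) < (v:ℝ) := by exact_mod_cast pos_iff_ne_zero.2 hv
  -- pointwise bound on the set
  have key : ∀ x ∈ {x : ℝ | a ≤ |x|}, gaussianPDF 0 v x ≤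
      ENNReal.ofReal (Real.exp (-a^2/(2*v))) * (gaussianPDF a v x + gaussianPDF (-a) v x) := by
    intro x hx
    simp only [mem_setOf_eq] at hx
    rw [gaussianPDF, gaussianPDF, gaussianPDF, ← ENNReal.ofReal_add (gaussianPDFReal_nonneg _ _ _)
      (gaussianPDFReal_nonneg _ _ _), ← ENNReal.ofReal_mul (Real.exp_nonneg _)]
    apply ENNReal.ofReal_le_ofReal
    have hinv : (0:ℝ) ≤ (Real.sqrt (2 * Real.pi * v))⁻¹ := by positivity
    rcases abs_cases x with ⟨hx1, hx2⟩ | ⟨hx1, hx2⟩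
    · -- x ≥ a ≥ 0
      have hxa : a ≤ x := hx1 ▸ hx
      have h1 : Real.exp (-(x - 0)^2/(2*v)) ≤
          Real.exp (-a^2/(2*v)) * Real.exp (-(x - a)^2/(2*v)) := by
        rw [← Real.exp_add]
        apply Real.exp_le_exp.2
        rw [← add_div, div_le_div_iff_of_pos_right (by positivity)]
        nlinarith
      unfold gaussianPDFReal
      nlinarith [mul_le_mul_of_nonneg_left h1 hinv,
        mul_nonneg (mul_nonneg (Real.exp_nonneg (-a^2/(2*(v:ℝ)))) hinv)
          (Real.exp_nonneg (-(x - -a)^2/(2*(v:ℝ))))]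
    · -- x ≤ -a
      have hxa : x ≤ -a := by rw [hx1] at hx; linarith
      have h1 : Real.exp (-(x - 0)^2/(2*v)) ≤
          Real.exp (-a^2/(2*v)) * Real.exp (-(x - -a)^2/(2*v)) := by
        rw [← Real.exp_add]
        apply Real.exp_le_exp.2
        rw [← add_div, div_le_div_iff_of_pos_right (by positivity)]
        nlinarith
      unfold gaussianPDFReal
      nlinarith [mul_le_mul_of_nonneg_left h1 hinv,
        mul_nonneg (mul_nonneg (Real.exp_nonneg (-a^2/(2*(v:ℝ)))) hinv)
          (Real.exp_nonneg (-(x - a)^2/(2*(v:ℝ))))]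
  calc gaussianReal 0 v {x : ℝ | a ≤ |x|}
      = ∫⁻ x in {x : ℝ | a ≤ |x|}, gaussianPDF 0 v x := gaussianReal_apply 0 hv _
    _ ≤ ∫⁻ x in {x : ℝ | a ≤ |x|},
        ENNReal.ofReal (Real.exp (-a^2/(2*v))) * (gaussianPDF a v x + gaussianPDF (-a) v x) :=
        setLIntegral_mono' (by
          have : {x : ℝ | a ≤ |x|} = (fun x : ℝ => |x|) ⁻¹' Ici a := rfl
          rw [this]
          exact measurableSet_Ici.preimage measurable_abs) key
    _ ≤ ∫⁻ x, ENNReal.ofReal (Real.exp (-a^2/(2*v))) * (gaussianPDF a v x + gaussianPDF (-a) v x) :=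
        setLIntegral_le_lintegral _ _
    _ = ENNReal.ofReal (Real.exp (-a^2/(2*v))) * (1 + 1) := by
        rw [lintegral_const_mul (f := fun x => gaussianPDF a v x + gaussianPDF (-a) v x) _ (((measurable_gaussianPDF a v).add (measurable_gaussianPDF (-a) v) :
            Measurable fun x => gaussianPDF a v x + gaussianPDF (-a) v x)),
          lintegral_add_left (measurable_gaussianPDF _ _),
          lintegral_gaussianPDF_eq_one _ hv, lintegral_gaussianPDF_eq_one _ hv]
    _ = ENNReal.ofReal (2 * Real.exp (-a^2/(2*v))) := by
        rw [ENNReal.ofReal_mul (by norm_num), mul_comm]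
        norm_num

lemma incr_tail {Ω : Type} [MeasurableSpace Ω] (P : Measure Ω) (B : ℝ → Ω → ℝ)
    (hmeas : ∀ t : ℝ, Measurable (B t))
    (hg : ∀ t h : ℝ, 0 ≤ t → 0 < h →
      P.map (fun ω => B (t + h) ω - B t ω) = gaussianReal 0 h.toNNReal)
    (t s a : ℝ) (ht : 0 ≤ t) (hs : 0 < s) (ha : 0 ≤ a) :
    P {ω | a ≤ |B (t + s) ω - B t ω|} ≤ ENNReal.ofReal (2 * Real.exp (-a^2/(2*s))) := by
  have hmf : Measurable (fun ω => B (t + s) ω - B t ω) := (hmeas _).sub (hmeas _)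
  have hset : MeasurableSet {x : ℝ | a ≤ |x|} :=
    measurableSet_Ici.preimage measurable_abs
  have : {ω | a ≤ |B (t + s) ω - B t ω|}
      = (fun ω => B (t + s) ω - B t ω) ⁻¹' {x : ℝ | a ≤ |x|} := rfl
  rw [this, ← Measure.map_apply hmf hset, hg t s ht hs]
  have hco : ((s.toNNReal : ℝ)) = s := Real.coe_toNNReal s hs.le
  have := gauss_abs_tail s.toNNReal (by simp [Real.toNNReal_eq_zero, not_le, hs]) a ha
  rwa [hco] at this

/-- bad fine event at level `j`: some dyadic step of size `2⁻ʲ` is large. -/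
def badF {Ω : Type} [MeasurableSpace Ω] (B : ℝ → Ω → ℝ) (j : ℕ) : Set Ω :=
  ⋃ k ∈ Finset.range (2^j),
    {ω | 2 * Real.sqrt (j * ((2:ℝ)^j)⁻¹) ≤ |B (((k:ℝ)+1)/2^j) ω - B ((k:ℝ)/2^j) ω|}

/-- bad main event at level `n`. -/
def badM {Ω : Type} [MeasurableSpace Ω] (B : ℝ → Ω → ℝ) (c₁ : ℝ) (n : ℕ) : Set Ω :=
  ⋃ k ∈ Finset.range (2^n+1), ⋃ l ∈ Finset.Icc 1 (n^2),
    {ω | c₁ * Real.sqrt (((l:ℝ)/2^n) * Real.log (1/((l:ℝ)/2^n)))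
        ≤ |B (((k:ℝ)+(l:ℝ))/2^n) ω - B ((k:ℝ)/2^n) ω|}

lemma badF_le {Ω : Type} [MeasurableSpace Ω] (P : Measure Ω) (B : ℝ → Ω → ℝ)
    (hmeas : ∀ t : ℝ, Measurable (B t))
    (hg : ∀ t h : ℝ, 0 ≤ t → 0 < h →
      P.map (fun ω => B (t + h) ω - B t ω) = gaussianReal 0 h.toNNReal) (j : ℕ) :
    P (badF B j) ≤ ENNReal.ofReal (2^j * (2 * Real.exp (-(2*j)))) := by
  have hpiece : ∀ k ∈ Finset.range (2^j),
      P {ω | 2 * Real.sqrt (j * ((2:ℝ)^j)⁻¹) ≤ |B (((k:ℝ)+1)/2^j) ω - B ((k:ℝ)/2^j) ω|}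
        ≤ ENNReal.ofReal (2 * Real.exp (-(2*j))) := by
    intro k _
    have e1 : ((k:ℝ)+1)/2^j = (k:ℝ)/2^j + ((2:ℝ)^j)⁻¹ := by ring
    have h2j : (0:ℝ) < ((2:ℝ)^j)⁻¹ := by positivity
    have := incr_tail P B hmeas hg ((k:ℝ)/2^j) (((2:ℝ)^j)⁻¹) (2 * Real.sqrt (j * ((2:ℝ)^j)⁻¹))
      (by positivity) h2j (by positivity)
    rw [← e1] at this
    refine this.trans (le_of_eq ?_)
    congr 2
    have : (2 * Real.sqrt (j * ((2:ℝ)^j)⁻¹))^2 = 4 * (j * ((2:ℝ)^j)⁻¹) := by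
      rw [mul_pow, Real.sq_sqrt (by positivity)]; norm_num
    rw [this]
    field_simp
    ring
  calc P (badF B j) ≤ ∑ k ∈ Finset.range (2^j), P {ω | 2 * Real.sqrt (j * ((2:ℝ)^j)⁻¹)
        ≤ |B (((k:ℝ)+1)/2^j) ω - B ((k:ℝ)/2^j) ω|} := measure_biUnion_finset_le _ _
    _ ≤ ∑ _k ∈ Finset.range (2^j), ENNReal.ofReal (2 * Real.exp (-(2*j))) :=
        Finset.sum_le_sum hpiece
    _ = ENNReal.ofReal (2^j * (2 * Real.exp (-(2*j)))) := by
        rw [Finset.sum_const, Finset.card_range, nsmul_eq_mul,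
          ← ENNReal.ofReal_natCast, ← ENNReal.ofReal_mul (by positivity)]
        norm_num

lemma badM_le {Ω : Type} [MeasurableSpace Ω] (P : Measure Ω) (B : ℝ → Ω → ℝ)
    (hmeas : ∀ t : ℝ, Measurable (B t))
    (hg : ∀ t h : ℝ, 0 ≤ t → 0 < h →
      P.map (fun ω => B (t + h) ω - B t ω) = gaussianReal 0 h.toNNReal) (c₁ : ℝ) (hc₁ : 0 ≤ c₁) (n : ℕ) (hn : 1 ≤ n)
    (hsmall : (n:ℝ)^2 * ((2:ℝ)^n)⁻¹ ≤ (Real.exp 1)⁻¹) :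
    P (badM B c₁ n) ≤ ENNReal.ofReal ((2^n+1) * n^2 *
      (2 * ((n:ℝ)^2 * ((2:ℝ)^n)⁻¹) ^ (c₁^2/2))) := by
  set X : ℝ := (n:ℝ)^2 * ((2:ℝ)^n)⁻¹ with hX
  have hXpos : 0 < X := by positivity
  have hpiece : ∀ k ∈ Finset.range (2^n+1), ∀ l ∈ Finset.Icc 1 (n^2),
      P {ω | c₁ * Real.sqrt (((l:ℝ)/2^n) * Real.log (1/((l:ℝ)/2^n)))
        ≤ |B (((k:ℝ)+(l:ℝ))/2^n) ω - B ((k:ℝ)/2^n) ω|}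
        ≤ ENNReal.ofReal (2 * X ^ (c₁^2/2)) := by
    intro k _ l hl
    simp only [Finset.mem_Icc] at hl
    have hl1 : (1:ℝ) ≤ (l:ℝ) := by exact_mod_cast hl.1
    have hln : (l:ℝ) ≤ (n:ℝ)^2 := by exact_mod_cast hl.2
    set s : ℝ := (l:ℝ)/2^n with hs
    have hspos : 0 < s := by positivity
    have hsX : s ≤ X := by
      rw [hs, hX, div_eq_mul_inv]
      exact mul_le_mul_of_nonneg_right hln (by positivity)
    have hs1 : s < 1 := by
      refine hsX.trans_lt (hsmall.trans_lt ?_)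
      have h1e : (1:ℝ) < Real.exp 1 := by
        have := Real.exp_one_gt_d9; linarith
      exact inv_lt_one_of_one_lt₀ h1e
    have hlog : 0 ≤ Real.log (1/s) := Real.log_nonneg (le_of_lt ((one_lt_one_div hspos hs1)))
    have e1 : ((k:ℝ)+(l:ℝ))/2^n = (k:ℝ)/2^n + s := by rw [hs]; ring
    have := incr_tail P B hmeas hg ((k:ℝ)/2^n) s (c₁ * Real.sqrt (s * Real.log (1/s)))
      (by positivity) hspos (by positivity)
    rw [← e1] at this
    refine this.trans ?_
    apply ENNReal.ofReal_le_ofReal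
    have ha2 : (c₁ * Real.sqrt (s * Real.log (1/s)))^2 = c₁^2 * (s * Real.log (1/s)) := by
      rw [mul_pow, Real.sq_sqrt (by positivity)]
    rw [ha2]
    have harg : -(c₁^2 * (s * Real.log (1/s)))/(2*s) = Real.log s * (c₁^2/2) := by
      rw [one_div, Real.log_inv]
      field_simp
    rw [harg, ← Real.rpow_def_of_pos hspos]
    have := Real.rpow_le_rpow hspos.le hsX (by positivity : (0:ℝ) ≤ c₁^2/2)
    linarith
  calc P (badM B c₁ n) ≤ ∑ k ∈ Finset.range (2^n+1), ∑ l ∈ Finset.Icc 1 (n^2),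
        P {ω | c₁ * Real.sqrt (((l:ℝ)/2^n) * Real.log (1/((l:ℝ)/2^n)))
          ≤ |B (((k:ℝ)+(l:ℝ))/2^n) ω - B ((k:ℝ)/2^n) ω|} := by
        refine (measure_biUnion_finset_le _ _).trans (Finset.sum_le_sum fun k hk => ?_)
        exact measure_biUnion_finset_le _ _
    _ ≤ ∑ _k ∈ Finset.range (2^n+1), ∑ _l ∈ Finset.Icc 1 (n^2),
        ENNReal.ofReal (2 * X ^ (c₁^2/2)) := by
        refine Finset.sum_le_sum fun k hk => Finset.sum_le_sum fun l hl => hpiece k hk l hl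
    _ = ENNReal.ofReal ((2^n+1) * n^2 * (2 * X ^ (c₁^2/2))) := by
        rw [Finset.sum_const, Finset.sum_const, Finset.card_range, Nat.card_Icc,
          smul_smul, nsmul_eq_mul, ← ENNReal.ofReal_natCast, ← ENNReal.ofReal_mul (by positivity)]
        congr 1
        push_cast
        ring

lemma bc_good {Ω : Type} [MeasurableSpace Ω] (P : Measure Ω) (B : ℝ → Ω → ℝ)
    (hmeas : ∀ t : ℝ, Measurable (B t))
    (hg : ∀ t h : ℝ, 0 ≤ t → 0 < h →
      P.map (fun ω => B (t + h) ω - B t ω) = gaussianReal 0 h.toNNReal) (c₁ : ℝ) (hc₁ : Real.sqrt 2 < c₁) :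
    ∀ᵐ ω ∂P, ∃ M : ℕ, ∀ n, M ≤ n → ω ∉ badF B n ∧ ω ∉ badM B c₁ n := by
  have h2 : (1:ℝ) < Real.sqrt 2 := by
    have : (1:ℝ) < 2 := one_lt_two
    nlinarith [Real.sq_sqrt (by norm_num : (0:ℝ) ≤ 2), Real.sqrt_nonneg 2]
  have hc₁1 : 1 < c₁ := h2.trans hc₁
  have hc₁sq : 2 < c₁^2 := by nlinarith [Real.sq_sqrt (by norm_num : (0:ℝ) ≤ 2)]
  set ε : ℝ := c₁^2/2 - 1 with hε
  have hεpos : 0 < ε := by rw [hε]; linarith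
  have hlog2 : 0 < Real.log (Real.sqrt 2) := Real.log_pos h2
  set w : ℝ := Real.exp (-(ε * Real.log (Real.sqrt 2))) with hw
  have hwpos : 0 < w := Real.exp_pos _
  have hw1 : w < 1 := by
    rw [hw, Real.exp_lt_one_iff]
    nlinarith
  -- eventually conditions
  have ev1 : ∀ᶠ n : ℕ in atTop, (n:ℝ)^2 * ((2:ℝ)^n)⁻¹ ≤ (Real.exp 1)⁻¹ := by
    have hs : Tendsto (fun n : ℕ => (n:ℝ)^2 * (2⁻¹:ℝ)^n) atTop (nhds 0) :=
      (summable_pow_mul_geometric_of_norm_lt_one 2 (r := (2⁻¹:ℝ))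
        (by rw [norm_inv, Real.norm_eq_abs]; rw [abs_of_pos (by norm_num : (0:ℝ) < 2)]; norm_num)).tendsto_atTop_zero
    have := hs.eventually_le_const (by positivity : (0:ℝ) < (Real.exp 1)⁻¹)
    filter_upwards [this] with n hn
    calc (n:ℝ)^2 * ((2:ℝ)^n)⁻¹ = (n:ℝ)^2 * (2⁻¹:ℝ)^n := by rw [inv_pow]
      _ ≤ (Real.exp 1)⁻¹ := hn
  have ev2 : ∀ᶠ n : ℕ in atTop, (n:ℝ)^2 ≤ (Real.sqrt 2)^n := by
    have hs : Tendsto (fun n : ℕ => (n:ℝ)^2 * ((Real.sqrt 2)⁻¹:ℝ)^n) atTop (nhds 0) :=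
      (summable_pow_mul_geometric_of_norm_lt_one 2 (r := (Real.sqrt 2)⁻¹)
        (by rw [norm_inv, Real.norm_eq_abs, abs_of_pos (by positivity)]
            exact inv_lt_one_of_one_lt₀ h2)).tendsto_atTop_zero
    have := hs.eventually_le_const (by norm_num : (0:ℝ) < 1)
    filter_upwards [this] with n hn
    have hp : (0:ℝ) < (Real.sqrt 2)^n := by positivity
    rw [inv_pow] at hn
    calc (n:ℝ)^2 = ((n:ℝ)^2 * ((Real.sqrt 2)^n)⁻¹) * (Real.sqrt 2)^n := by field_simp
      _ ≤ 1 * (Real.sqrt 2)^n := by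
          exact mul_le_mul_of_nonneg_right hn hp.le
      _ = (Real.sqrt 2)^n := one_mul _
  obtain ⟨N₀, hN₀⟩ := eventually_atTop.1 (ev1.and (ev2.and (eventually_ge_atTop 1)))
  -- the real bound sequence
  set G : ℕ → ℝ := fun n => 2*(2*Real.exp (-2))^n + 4*(n:ℝ)^4*w^n with hG
  have hGnonneg : ∀ n, 0 ≤ G n := by
    intro n
    have : (0:ℝ) ≤ 2*Real.exp (-2) := by positivity
    positivity
  have hGsummable : Summable G := by
    apply Summable.add
    · apply Summable.mul_left
      apply summable_geometric_of_lt_one (by positivity)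
      have he : (2:ℝ) < Real.exp 1 := by
        have := Real.exp_one_gt_d9; linarith
      have : Real.exp (-2) < 2⁻¹ := by
        rw [show (-2:ℝ) = -1 + -1 by norm_num, Real.exp_add]
        have h1 : Real.exp (-1) < 2⁻¹ := by
          rw [Real.exp_neg]
          exact inv_strictAnti₀ (by norm_num) he
        nlinarith [Real.exp_pos (-1:ℝ)]
      nlinarith [Real.exp_pos (-2:ℝ)]
    · have := summable_pow_mul_geometric_of_norm_lt_one 4
        (r := w) (by rw [Real.norm_eq_abs, abs_of_pos hwpos]; exact hw1)
      exact (this.mul_left 4).congr (by intro n; push_cast; ring)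
  -- bound on shifted bad sets
  have hbound : ∀ m : ℕ, P (badF B (m+N₀) ∪ badM B c₁ (m+N₀))
      ≤ ENNReal.ofReal (G (m+N₀)) := by
    intro m
    set n := m + N₀ with hn
    obtain ⟨h1, h2', h3⟩ := hN₀ n (by omega)
    refine (measure_union_le _ _).trans ?_
    have bF : P (badF B n) ≤ ENNReal.ofReal (2*(2*Real.exp (-2))^n) := by
      refine (badF_le P B hmeas hg n).trans (le_of_eq ?_)
      congr 1
      rw [mul_pow, show (-(2*(n:ℝ))) = (n:ℝ) * (-2) by ring, Real.exp_nat_mul]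
      ring
    have bM : P (badM B c₁ n) ≤ ENNReal.ofReal (4*(n:ℝ)^4*w^n) := by
      refine (badM_le P B hmeas hg c₁ (by linarith) n h3 h1).trans (ENNReal.ofReal_le_ofReal ?_)
      set X : ℝ := (n:ℝ)^2 * ((2:ℝ)^n)⁻¹ with hX
      have hXpos : 0 < X := by positivity
      have hXle : X ≤ ((Real.sqrt 2)⁻¹)^n := by
        rw [hX, inv_pow]
        have h2n : ((2:ℝ)^n) = (Real.sqrt 2)^n * (Real.sqrt 2)^n := by
          rw [← mul_pow, Real.mul_self_sqrt (by norm_num)]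
        rw [h2n, mul_inv]
        calc (n:ℝ)^2 * (((Real.sqrt 2)^n)⁻¹ * ((Real.sqrt 2)^n)⁻¹)
            ≤ (Real.sqrt 2)^n * (((Real.sqrt 2)^n)⁻¹ * ((Real.sqrt 2)^n)⁻¹) := by
              apply mul_le_mul_of_nonneg_right h2' (by positivity)
          _ = ((Real.sqrt 2)^n)⁻¹ := by field_simp
      have hXrpow : X ^ (c₁^2/2) ≤ X * w^n := by
        have e1 : X ^ (c₁^2/2) = X * X ^ ε := by
          rw [show (c₁^2/2 : ℝ) = 1 + ε by rw [hε]; ring,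
            Real.rpow_add hXpos, Real.rpow_one]
        rw [e1]
        apply mul_le_mul_of_nonneg_left _ hXpos.le
        calc X ^ ε ≤ (((Real.sqrt 2)⁻¹)^n) ^ ε :=
              Real.rpow_le_rpow hXpos.le hXle hεpos.le
          _ = w^n := by
              rw [← Real.rpow_natCast (((Real.sqrt 2)⁻¹)) n, ← Real.rpow_mul (by positivity),
                Real.rpow_def_of_pos (by positivity), hw, ← Real.exp_nat_mul]
              congr 1
              rw [Real.log_inv]
              ring
      calc ((2:ℝ)^n+1) * (n:ℝ)^2 * (2 * X ^ (c₁^2/2))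
          ≤ ((2:ℝ)^n+(2:ℝ)^n) * (n:ℝ)^2 * (2 * (X * w^n)) := by
            have h2n1 : (1:ℝ) ≤ (2:ℝ)^n := one_le_pow₀ (by norm_num)
            apply mul_le_mul (by nlinarith [sq_nonneg (n:ℝ)]) (by nlinarith) (by positivity)
            positivity
        _ = 4*(n:ℝ)^4*w^n * ((2:ℝ)^n * ((2:ℝ)^n)⁻¹) := by rw [hX]; ring
        _ = 4*(n:ℝ)^4*w^n := by
            rw [mul_inv_cancel₀ (by positivity), mul_one]
    calc P (badF B n) + P (badM B c₁ n)
        ≤ ENNReal.ofReal (2*(2*Real.exp (-2))^n) + ENNReal.ofReal (4*(n:ℝ)^4*w^n) :=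
          add_le_add bF bM
      _ = ENNReal.ofReal (G n) := by
          rw [← ENNReal.ofReal_add (by positivity) (by positivity)]
  -- Borel-Cantelli
  have hsum : (∑' m : ℕ, P (badF B (m+N₀) ∪ badM B c₁ (m+N₀))) ≠ ⊤ := by
    apply ne_top_of_le_ne_top _ (ENNReal.tsum_le_tsum hbound)
    rw [← ENNReal.ofReal_tsum_of_nonneg (fun m => hGnonneg _)
      ((summable_nat_add_iff N₀).2 hGsummable)]
    exact ENNReal.ofReal_ne_top
  filter_upwards [ae_eventually_notMem hsum] with ω hω
  obtain ⟨M₁, hM₁⟩ := eventually_atTop.1 hω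
  refine ⟨M₁ + N₀, fun n hn => ?_⟩
  have := hM₁ (n - N₀) (by omega)
  rw [show n - N₀ + N₀ = n by omega] at this
  simp only [Set.mem_union, not_or] at this
  exact this

lemma sqrt_pow' (x : ℝ) (hx : 0 ≤ x) (m : ℕ) :
    Real.sqrt (x^m) = (Real.sqrt x)^m := by
  rw [← Real.sqrt_sq (pow_nonneg (Real.sqrt_nonneg x) m)]
  congr 1
  rw [← pow_mul, mul_comm m 2, pow_mul, Real.sq_sqrt hx]

lemma nm_le_pow (n m : ℕ) (hn : 3 ≤ n) : ((n:ℝ) + m) ≤ n * (Real.sqrt 2)^m := by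
  have h2 : (1.4:ℝ) ≤ Real.sqrt 2 := by
    nlinarith [Real.sq_sqrt (by norm_num : (0:ℝ) ≤ 2), Real.sqrt_nonneg 2]
  induction m with
  | zero => simp
  | succ m ih =>
    have hn3 : (3:ℝ) ≤ (n:ℝ) := by exact_mod_cast hn
    have hpow : (1:ℝ) ≤ (Real.sqrt 2)^m := one_le_pow₀ (by linarith)
    push_cast
    push_cast at ih
    calc (n:ℝ) + (m + 1) ≤ ((n:ℝ) + m) * 1.4 := by nlinarith
      _ ≤ ((n:ℝ) * (Real.sqrt 2)^m) * Real.sqrt 2 := by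
          apply mul_le_mul ih h2 (by norm_num) (by positivity)
      _ = (n:ℝ) * (Real.sqrt 2)^(m+1) := by ring

lemma term_bound (n m : ℕ) (hn : 3 ≤ n) :
    Real.sqrt (((n:ℝ)+m) * ((2:ℝ)^(n+m))⁻¹)
      ≤ Real.sqrt ((n:ℝ) * ((2:ℝ)^n)⁻¹) * ((Real.sqrt (Real.sqrt 2))⁻¹)^m := by
  have key : ((n:ℝ)+m) * ((2:ℝ)^(n+m))⁻¹
      ≤ ((n:ℝ) * ((2:ℝ)^n)⁻¹) * (((Real.sqrt 2)⁻¹)^m) := by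
    have h1 := nm_le_pow n m hn
    have h2 : ((2:ℝ)^(n+m))⁻¹ = ((2:ℝ)^n)⁻¹ * ((2:ℝ)^m)⁻¹ := by
      rw [pow_add, mul_inv]
    have h3 : (Real.sqrt 2)^m * ((2:ℝ)^m)⁻¹ = ((Real.sqrt 2)⁻¹)^m := by
      rw [inv_pow, show ((2:ℝ)^m) = (Real.sqrt 2)^m * (Real.sqrt 2)^m by
        rw [← mul_pow, Real.mul_self_sqrt (by norm_num)], mul_inv]
      field_simp
    calc ((n:ℝ)+m) * ((2:ℝ)^(n+m))⁻¹ ≤ ((n:ℝ) * (Real.sqrt 2)^m) * ((2:ℝ)^(n+m))⁻¹ := by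
          apply mul_le_mul_of_nonneg_right h1 (by positivity)
      _ = ((n:ℝ) * ((2:ℝ)^n)⁻¹) * ((Real.sqrt 2)^m * ((2:ℝ)^m)⁻¹) := by rw [h2]; ring
      _ = ((n:ℝ) * ((2:ℝ)^n)⁻¹) * (((Real.sqrt 2)⁻¹)^m) := by rw [h3]
  calc Real.sqrt (((n:ℝ)+m) * ((2:ℝ)^(n+m))⁻¹)
      ≤ Real.sqrt (((n:ℝ) * ((2:ℝ)^n)⁻¹) * (((Real.sqrt 2)⁻¹)^m)) := Real.sqrt_le_sqrt key
    _ = Real.sqrt ((n:ℝ) * ((2:ℝ)^n)⁻¹) * ((Real.sqrt (Real.sqrt 2))⁻¹)^m := by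
        rw [Real.sqrt_mul (by positivity), sqrt_pow' _ (by positivity), Real.sqrt_inv]

lemma sum_tail_bound (n J : ℕ) (hn : 3 ≤ n) :
    ∑ j ∈ Finset.Ico n J, 2 * Real.sqrt (((j:ℝ)+1) * ((2:ℝ)^(j+1))⁻¹)
      ≤ 11 * Real.sqrt ((n:ℝ) * ((2:ℝ)^n)⁻¹) := by
  set ρ : ℝ := (Real.sqrt (Real.sqrt 2))⁻¹ with hρ
  set S : ℝ := Real.sqrt ((n:ℝ) * ((2:ℝ)^n)⁻¹) with hS
  have hSnn : 0 ≤ S := Real.sqrt_nonneg _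
  -- numeric bounds on ρ
  have hσ : (1.189:ℝ) ≤ Real.sqrt (Real.sqrt 2) := by
    have h2 : (1.414:ℝ) ≤ Real.sqrt 2 := by
      nlinarith [Real.sq_sqrt (by norm_num : (0:ℝ) ≤ 2), Real.sqrt_nonneg 2]
    nlinarith [Real.sq_sqrt (by positivity : (0:ℝ) ≤ Real.sqrt 2),
      Real.sqrt_nonneg (Real.sqrt 2)]
  have hρpos : 0 < ρ := by rw [hρ]; positivity
  have hρle : ρ ≤ 0.842 := by
    rw [hρ]
    rw [show (0.842:ℝ) = (1/0.842)⁻¹ by norm_num]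
    apply inv_anti₀ (by norm_num)
    linarith
  have hρ1 : ρ < 1 := by linarith
  calc ∑ j ∈ Finset.Ico n J, 2 * Real.sqrt (((j:ℝ)+1) * ((2:ℝ)^(j+1))⁻¹)
      ≤ ∑ j ∈ Finset.Ico n J, (2 * S) * ρ^(j+1-n) := by
        apply Finset.sum_le_sum
        intro j hj
        simp only [Finset.mem_Ico] at hj
        have hj1 : n + (j+1-n) = j+1 := by omega
        have := term_bound n (j+1-n) hn
        rw [hj1] at this
        push_cast at this
        have : Real.sqrt (((j:ℝ)+1) * ((2:ℝ)^(j+1))⁻¹) ≤ S * ρ^(j+1-n) := by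
          rw [hS, hρ]
          convert this using 3
          rw [Nat.cast_sub (by omega : n ≤ j+1)]
          push_cast
          ring
        linarith
    _ = (2 * S) * ∑ j ∈ Finset.Ico n J, ρ^(j+1-n) := by rw [Finset.mul_sum]
    _ ≤ (2 * S) * (ρ / (1 - ρ)) := by
        apply mul_le_mul_of_nonneg_left _ (by positivity)
        rw [Finset.sum_Ico_eq_sum_range]
        have : ∀ k ∈ Finset.range (J - n), ρ^(n+k+1-n) = ρ * ρ^k := by
          intro k _
          rw [show n+k+1-n = k+1 by omega]
          ring
        rw [Finset.sum_congr rfl this, ← Finset.mul_sum]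
        rw [div_eq_mul_inv]
        apply mul_le_mul_of_nonneg_left _ hρpos.le
        calc ∑ k ∈ Finset.range (J-n), ρ^k ≤ ∑' k : ℕ, ρ^k :=
              Summable.sum_le_tsum _ (fun k _ => by positivity)
                (summable_geometric_of_lt_one hρpos.le hρ1)
          _ = (1-ρ)⁻¹ := tsum_geometric_of_lt_one hρpos.le hρ1
    _ ≤ 11 * S := by
        have h1ρ : (0.158:ℝ) ≤ 1 - ρ := by linarith
        have hd : ρ / (1-ρ) ≤ 0.842/0.158 :=
          div_le_div₀ (by norm_num) hρle (by norm_num) h1ρ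
        have : (0.842:ℝ)/0.158 ≤ 5.4 := by norm_num
        nlinarith

lemma chain_ceil (f : ℝ → ℝ) (n : ℕ) (hn : 3 ≤ n) (t : ℝ) (ht : 0 ≤ t)
    (ht1 : t + ((2:ℝ)^n)⁻¹ ≤ 1)
    (hcont : ContinuousWithinAt f (Ici 0) t)
    (hgood : ∀ j : ℕ, n ≤ j → ∀ k : ℕ, k < 2^j →
       |f (((k:ℝ)+1)/2^j) - f ((k:ℝ)/2^j)| < 2 * Real.sqrt ((j:ℝ) * ((2:ℝ)^j)⁻¹)) :
    |f ((⌈t * 2^n⌉₊ : ℝ)/2^n) - f t| ≤ 11 * Real.sqrt ((n:ℝ) * ((2:ℝ)^n)⁻¹) := by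
  set y : ℕ → ℝ := fun j => ((⌈t * 2^j⌉₊ : ℝ)/2^j) with hy
  have hy1 : ∀ j, t ≤ y j := by
    intro j
    rw [hy, le_div_iff₀ (by positivity)]
    exact Nat.le_ceil _
  have hy2 : ∀ j, y j < t + ((2:ℝ)^j)⁻¹ := by
    intro j
    rw [hy]
    simp only
    rw [div_lt_iff₀ (by positivity)]
    have := Nat.ceil_lt_add_one (by positivity : (0:ℝ) ≤ t * 2^j)
    calc ((⌈t * 2^j⌉₊ : ℝ)) < t * 2^j + 1 := this
      _ = (t + ((2:ℝ)^j)⁻¹) * 2^j := by field_simp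
  -- single step bound
  have step : ∀ j : ℕ, n ≤ j → |f (y j) - f (y (j+1))| ≤
      2 * Real.sqrt (((j:ℝ)+1) * ((2:ℝ)^(j+1))⁻¹) := by
    intro j hj
    set a := ⌈t * 2^j⌉₊ with ha
    set b := ⌈t * 2^(j+1)⌉₊ with hb
    have e1 : (t:ℝ) * 2^j ≤ a := Nat.le_ceil _
    have e2 : (a:ℝ) < t * 2^j + 1 := Nat.ceil_lt_add_one (by positivity)
    have e3 : (t:ℝ) * 2^(j+1) ≤ b := Nat.le_ceil _
    have e4 : (b:ℝ) < t * 2^(j+1) + 1 := Nat.ceil_lt_add_one (by positivity)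
    have hba : b ≤ 2*a ∧ 2*a ≤ b+1 := by
      constructor
      · have : (b:ℝ) < 2*a + 1 := by
          calc (b:ℝ) < t * 2^(j+1) + 1 := e4
            _ ≤ 2*a + 1 := by
              have : (t:ℝ) * 2^(j+1) = 2 * (t * 2^j) := by ring
              rw [this]; push_cast; linarith
        exact_mod_cast Nat.lt_add_one_iff.1 (by exact_mod_cast this)
      · have : (2*a:ℝ) < b + 2 := by
          calc (2*a:ℝ) < 2*(t*2^j) + 2 := by push_cast; linarith
            _ = t * 2^(j+1) + 2 := by ring
            _ ≤ (b:ℝ) + 2 := by linarith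
        have : (2*a:ℕ) < b + 2 := by exact_mod_cast this
        omega
    rcases (by omega : b = 2*a ∨ b + 1 = 2*a) with hcase | hcase
    · -- no move
      have : y j = y (j+1) := by
        show (a:ℝ)/2^j = (b:ℝ)/2^(j+1)
        have hc : (b:ℝ) = 2*(a:ℝ) := by exact_mod_cast hcase
        rw [hc]; ring
      rw [this, sub_self, abs_zero]
      positivity
    · -- single step at level j+1 from index b
      have hyj : y j = ((b:ℝ)+1)/2^(j+1) := by
        show (a:ℝ)/2^j = ((b:ℝ)+1)/2^(j+1)
        have hc : ((b:ℝ)+1) = 2*(a:ℝ) := by exact_mod_cast hcase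
        rw [hc]; ring
      have hyj1 : y (j+1) = (b:ℝ)/2^(j+1) := by rw [hy]
      have hlt : y j < 1 := by
        calc y j < t + ((2:ℝ)^j)⁻¹ := hy2 j
          _ ≤ t + ((2:ℝ)^n)⁻¹ := by
            have := pow_le_pow_right₀ (by norm_num : (1:ℝ) ≤ 2) hj
            gcongr
          _ ≤ 1 := ht1
      have hkb : b < 2^(j+1) := by
        have : ((b:ℝ)+1) < 2^(j+1) := by
          have := hlt
          rw [hyj, div_lt_one (by positivity)] at this
          exact this
        have : ((b:ℝ)+1) ≤ 2^(j+1) := this.le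
        have h2 : (b+1 : ℕ) ≤ 2^(j+1) := by exact_mod_cast this
        omega
      have := hgood (j+1) (by omega) b hkb
      rw [hyj, hyj1]
      push_cast at this ⊢
      linarith
  -- partial sums
  have partial_bd : ∀ J, n ≤ J → |f (y n) - f (y J)| ≤
      ∑ j ∈ Finset.Ico n J, 2 * Real.sqrt (((j:ℝ)+1) * ((2:ℝ)^(j+1))⁻¹) := by
    intro J
    induction J with
    | zero => intro h; rw [Nat.le_zero.1 h]; simp
    | succ J ih =>
      intro hJ
      rcases Nat.lt_or_ge n (J+1) with h | h
      · have hnJ : n ≤ J := by omega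
        calc |f (y n) - f (y (J+1))| ≤ |f (y n) - f (y J)| + |f (y J) - f (y (J+1))| := by
              have := abs_sub_abs_le_abs_sub (f (y n) - f (y J)) (f (y n) - f (y (J+1)))
              calc |f (y n) - f (y (J+1))|
                  = |(f (y n) - f (y J)) + (f (y J) - f (y (J+1)))| := by ring_nf
                _ ≤ _ := abs_add_le _ _
          _ ≤ (∑ j ∈ Finset.Ico n J, 2 * Real.sqrt (((j:ℝ)+1) * ((2:ℝ)^(j+1))⁻¹))
              + 2 * Real.sqrt (((J:ℝ)+1) * ((2:ℝ)^(J+1))⁻¹) := by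
              have h1 := ih hnJ
              have h2 := step J hnJ
              linarith
          _ = ∑ j ∈ Finset.Ico n (J+1), 2 * Real.sqrt (((j:ℝ)+1) * ((2:ℝ)^(j+1))⁻¹) := by
              rw [Finset.sum_Ico_succ_top hnJ]
      · have : n = J + 1 := by omega
        rw [← this]
        simp
  -- limit
  have hyt : Tendsto y atTop (nhds t) := by
    have hub : Tendsto (fun j : ℕ => t + ((2:ℝ)^j)⁻¹) atTop (nhds (t + 0)) := by
      apply Tendsto.const_add
      apply tendsto_inv_atTop_zero.comp
      exact tendsto_pow_atTop_atTop_of_one_lt (by norm_num : (1:ℝ) < 2)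
    rw [add_zero] at hub
    exact tendsto_of_tendsto_of_tendsto_of_le_of_le tendsto_const_nhds hub
      (fun j => hy1 j) (fun j => (hy2 j).le)
  have hfy : Tendsto (fun j => f (y j)) atTop (nhds (f t)) := by
    apply hcont.tendsto.comp
    rw [tendsto_nhdsWithin_iff]
    exact ⟨hyt, Eventually.of_forall fun j => ht.trans (hy1 j)⟩
  have hfinal : Tendsto (fun J => |f (y n) - f (y J)|) atTop
      (nhds (|f (y n) - f t|)) := ((tendsto_const_nhds.sub hfy).abs)
  apply le_of_tendsto hfinal
  filter_upwards [eventually_ge_atTop n] with J hJ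
  exact (partial_bd J hJ).trans (sum_tail_bound n J hn)

lemma chain_floor (f : ℝ → ℝ) (n : ℕ) (hn : 3 ≤ n) (x : ℝ) (hx : 0 ≤ x) (hx1 : x ≤ 1)
    (hcont : ContinuousWithinAt f (Ici 0) x)
    (hgood : ∀ j : ℕ, n ≤ j → ∀ k : ℕ, k < 2^j →
       |f (((k:ℝ)+1)/2^j) - f ((k:ℝ)/2^j)| < 2 * Real.sqrt ((j:ℝ) * ((2:ℝ)^j)⁻¹)) :
    |f ((⌊x * 2^n⌋₊ : ℝ)/2^n) - f x| ≤ 11 * Real.sqrt ((n:ℝ) * ((2:ℝ)^n)⁻¹) := by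
  set y : ℕ → ℝ := fun j => ((⌊x * 2^j⌋₊ : ℝ)/2^j) with hy
  have hy1 : ∀ j, y j ≤ x := by
    intro j
    show ((⌊x * 2^j⌋₊ : ℝ)/2^j) ≤ x
    rw [div_le_iff₀ (by positivity)]
    exact Nat.floor_le (by positivity)
  have hy0 : ∀ j, 0 ≤ y j := by
    intro j
    show (0:ℝ) ≤ ((⌊x * 2^j⌋₊ : ℝ)/2^j)
    positivity
  have hy2 : ∀ j, x - ((2:ℝ)^j)⁻¹ < y j := by
    intro j
    show x - ((2:ℝ)^j)⁻¹ < ((⌊x * 2^j⌋₊ : ℝ)/2^j)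
    rw [lt_div_iff₀ (by positivity)]
    have := Nat.sub_one_lt_floor (x * 2^j)
    calc (x - ((2:ℝ)^j)⁻¹) * 2^j = x * 2^j - 1 := by field_simp
      _ < (⌊x * 2^j⌋₊ : ℝ) := this
  have step : ∀ j : ℕ, n ≤ j → |f (y j) - f (y (j+1))| ≤
      2 * Real.sqrt (((j:ℝ)+1) * ((2:ℝ)^(j+1))⁻¹) := by
    intro j hj
    set a := ⌊x * 2^j⌋₊ with ha
    set b := ⌊x * 2^(j+1)⌋₊ with hb
    have e1 : (a:ℝ) ≤ x * 2^j := Nat.floor_le (by positivity)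
    have e2 : x * 2^j - 1 < (a:ℝ) := Nat.sub_one_lt_floor _
    have e3 : (b:ℝ) ≤ x * 2^(j+1) := Nat.floor_le (by positivity)
    have e4 : x * 2^(j+1) - 1 < (b:ℝ) := Nat.sub_one_lt_floor _
    have hba : 2*a ≤ b ∧ b ≤ 2*a+1 := by
      constructor
      · have : (2*a:ℝ) < b + 1 := by
          calc (2*a:ℝ) ≤ 2*(x*2^j) := by push_cast; linarith
            _ = x * 2^(j+1) := by ring
            _ < (b:ℝ) + 1 := by linarith
        have : (2*a:ℕ) < b + 1 := by exact_mod_cast this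
        omega
      · have : (b:ℝ) < 2*a + 2 := by
          calc (b:ℝ) ≤ x * 2^(j+1) := e3
            _ = 2*(x*2^j) := by ring
            _ < 2*((a:ℝ)+1) := by linarith
            _ = 2*(a:ℝ) + 2 := by ring
        have : (b:ℕ) < 2*a + 2 := by exact_mod_cast this
        omega
    rcases (by omega : b = 2*a ∨ b = 2*a + 1) with hcase | hcase
    · have : y j = y (j+1) := by
        show (a:ℝ)/2^j = (b:ℝ)/2^(j+1)
        have hc : (b:ℝ) = 2*(a:ℝ) := by exact_mod_cast hcase
        rw [hc]; ring
      rw [this, sub_self, abs_zero]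
      positivity
    · -- step at level j+1 from index 2a
      have hyj : y j = ((2*a:ℕ):ℝ)/2^(j+1) := by
        show (a:ℝ)/2^j = ((2*a:ℕ):ℝ)/2^(j+1)
        push_cast
        ring
      have hyj1 : y (j+1) = (((2*a:ℕ):ℝ)+1)/2^(j+1) := by
        show (b:ℝ)/2^(j+1) = (((2*a:ℕ):ℝ)+1)/2^(j+1)
        have hc : (b:ℝ) = 2*(a:ℝ)+1 := by exact_mod_cast hcase
        rw [hc]; push_cast; ring
      have hkb : (2*a:ℕ) < 2^(j+1) := by
        have h1 : ((b:ℝ)) ≤ 2^(j+1) := by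
          calc (b:ℝ) ≤ x * 2^(j+1) := e3
            _ ≤ 2^(j+1) := by nlinarith [pow_pos (by norm_num : (0:ℝ) < 2) (j+1)]
        have h2 : (b:ℕ) ≤ 2^(j+1) := by exact_mod_cast h1
        omega
      have := hgood (j+1) (by omega) (2*a) hkb
      rw [hyj, hyj1, abs_sub_comm]
      push_cast at this ⊢
      linarith
  have partial_bd : ∀ J, n ≤ J → |f (y n) - f (y J)| ≤
      ∑ j ∈ Finset.Ico n J, 2 * Real.sqrt (((j:ℝ)+1) * ((2:ℝ)^(j+1))⁻¹) := by
    intro J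
    induction J with
    | zero => intro h; rw [Nat.le_zero.1 h]; simp
    | succ J ih =>
      intro hJ
      rcases Nat.lt_or_ge n (J+1) with h | h
      · have hnJ : n ≤ J := by omega
        calc |f (y n) - f (y (J+1))| ≤ |f (y n) - f (y J)| + |f (y J) - f (y (J+1))| := by
              calc |f (y n) - f (y (J+1))|
                  = |(f (y n) - f (y J)) + (f (y J) - f (y (J+1)))| := by ring_nf
                _ ≤ _ := abs_add_le _ _
          _ ≤ (∑ j ∈ Finset.Ico n J, 2 * Real.sqrt (((j:ℝ)+1) * ((2:ℝ)^(j+1))⁻¹))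
              + 2 * Real.sqrt (((J:ℝ)+1) * ((2:ℝ)^(J+1))⁻¹) := by
              have h1 := ih hnJ
              have h2 := step J hnJ
              linarith
          _ = ∑ j ∈ Finset.Ico n (J+1), 2 * Real.sqrt (((j:ℝ)+1) * ((2:ℝ)^(j+1))⁻¹) := by
              rw [Finset.sum_Ico_succ_top hnJ]
      · have : n = J + 1 := by omega
        rw [← this]
        simp
  have hyt : Tendsto y atTop (nhds x) := by
    have hub : Tendsto (fun j : ℕ => x - ((2:ℝ)^j)⁻¹) atTop (nhds (x - 0)) := by
      apply Tendsto.const_sub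
      apply tendsto_inv_atTop_zero.comp
      exact tendsto_pow_atTop_atTop_of_one_lt (by norm_num : (1:ℝ) < 2)
    rw [sub_zero] at hub
    exact tendsto_of_tendsto_of_tendsto_of_le_of_le hub tendsto_const_nhds
      (fun j => (hy2 j).le) (fun j => hy1 j)
  have hfy : Tendsto (fun j => f (y j)) atTop (nhds (f x)) := by
    apply hcont.tendsto.comp
    rw [tendsto_nhdsWithin_iff]
    exact ⟨hyt, Eventually.of_forall fun j => hy0 j⟩
  have hfinal : Tendsto (fun J => |f (y n) - f (y J)|) atTop
      (nhds (|f (y n) - f x|)) := ((tendsto_const_nhds.sub hfy).abs)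
  apply le_of_tendsto hfinal
  filter_upwards [eventually_ge_atTop n] with J hJ
  exact (partial_bd J hJ).trans (sum_tail_bound n J hn)

lemma xlog_mono {s h : ℝ} (hs : 0 < s) (hsh : s ≤ h) (hh : h ≤ (Real.exp 1)⁻¹) :
    s * Real.log (1/s) ≤ h * Real.log (1/h) := by
  have hhpos : 0 < h := hs.trans_le hsh
  have hlog1 : 1 ≤ Real.log (1/h) := by
    rw [Real.le_log_iff_exp_le (by positivity : (0:ℝ) < 1/h), one_div]
    calc Real.exp 1 = ((Real.exp 1)⁻¹)⁻¹ := by rw [inv_inv]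
      _ ≤ h⁻¹ := inv_anti₀ hhpos hh
  have hid : Real.log (1/s) = Real.log (1/h) + Real.log (h/s) := by
    rw [one_div, one_div, Real.log_inv, Real.log_inv, Real.log_div (ne_of_gt hhpos) (ne_of_gt hs)]
    ring
  have hls : Real.log (h/s) ≤ h/s - 1 := Real.log_le_sub_one_of_pos (by positivity)
  have h2 : s * Real.log (h/s) ≤ h - s := by
    have := mul_le_mul_of_nonneg_left hls hs.le
    calc s * Real.log (h/s) ≤ s * (h/s - 1) := this
      _ = h - s := by field_simp
  calc s * Real.log (1/s) = s * Real.log (1/h) + s * Real.log (h/s) := by rw [hid]; ring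
    _ ≤ s * Real.log (1/h) + (h - s) := by linarith
    _ ≤ s * Real.log (1/h) + (h - s) * Real.log (1/h) := by nlinarith
    _ = h * Real.log (1/h) := by ring

end AuxLevy

/-- Upper modulus of continuity (Lévy): for every `c > √2`, almost surely there
is `h₀ > 0` such that for all `h ∈ (0, h₀)` and all `t ∈ [0, 1 − h]`,
`|B(t+h) − B(t)| < c·√(h·log(1/h))`. -/
theorem stmt_6 {Ω : Type} [MeasurableSpace Ω] (P : Measure Ω) (B : ℝ → Ω → ℝ)
    (hB : IsStdBM P B) (c : ℝ) (hc : Real.sqrt 2 < c) :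
    ∀ᵐ ω ∂P, ∃ h₀ : ℝ, 0 < h₀ ∧ ∀ h : ℝ, 0 < h → h < h₀ →
      ∀ t : ℝ, 0 ≤ t → t ≤ 1 - h →
        |B (t + h) ω - B t ω| < c * Real.sqrt (h * Real.log (1 / h)) := by
  have hsqrt2 : (1:ℝ) < Real.sqrt 2 := by
    nlinarith [Real.sq_sqrt (by norm_num : (0:ℝ) ≤ 2), Real.sqrt_nonneg 2]
  set c₁ : ℝ := (Real.sqrt 2 + c)/2 with hc₁def
  have hc₁gt : Real.sqrt 2 < c₁ := by rw [hc₁def]; linarith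
  have hc₁lt : c₁ < c := by rw [hc₁def]; linarith
  have hc₁pos : 0 < c₁ := by linarith
  set δ : ℝ := c - c₁ with hδdef
  have hδpos : 0 < δ := by rw [hδdef]; linarith
  set K : ℝ := 3 + 968/δ^2 with hKdef
  have hK3 : 3 ≤ K := by
    rw [hKdef]
    have : 0 < 968/δ^2 := by positivity
    linarith
  have hKpos : 0 < K := by linarith
  have hKδ : 968 ≤ δ^2 * K := by
    rw [hKdef]
    have h1 : δ^2 * (968/δ^2) = 968 := by field_simp
    nlinarith [sq_nonneg δ]
  -- deterministic eventual conditions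
  have ev2 : ∀ᶠ n : ℕ in atTop, 2*K ≤ (n:ℝ)^2 := by
    have := tendsto_natCast_atTop_atTop (R := ℝ)
    filter_upwards [this.eventually_ge_atTop (2*K), eventually_ge_atTop 1] with n h1 h2
    have hn1 : (1:ℝ) ≤ (n:ℝ) := by exact_mod_cast h2
    nlinarith
  have ev3 : ∀ᶠ n : ℕ in atTop, 2*K*((2:ℝ)^n)⁻¹ ≤ (Real.exp 1)⁻¹ := by
    have hs : Tendsto (fun n : ℕ => 2*K*((2:ℝ)^n)⁻¹) atTop (nhds 0) := by
      have h1 : Tendsto (fun n : ℕ => ((2:ℝ)^n)⁻¹) atTop (nhds 0) :=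
        tendsto_inv_atTop_zero.comp (tendsto_pow_atTop_atTop_of_one_lt (by norm_num))
      have := h1.const_mul (2*K)
      simpa using this
    exact hs.eventually_le_const (by positivity)
  have ev4 : ∀ᶠ n : ℕ in atTop, Real.log (2*K) + (n:ℝ)/2 ≤ (n:ℝ) * Real.log 2 := by
    have hlog2 : (0.69:ℝ) < Real.log 2 := by
      have := Real.log_two_gt_d9; linarith
    have hs : Tendsto (fun n : ℕ => (n:ℝ) * (Real.log 2 - 1/2)) atTop atTop :=
      Tendsto.atTop_mul_const (by linarith) (tendsto_natCast_atTop_atTop)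
    filter_upwards [hs.eventually_ge_atTop (Real.log (2*K))] with n hn
    nlinarith
  obtain ⟨N₁, hN₁⟩ := eventually_atTop.1 ((ev2.and (ev3.and ev4)).and (eventually_ge_atTop 3))
  filter_upwards [bc_good P B hB.meas hB.gaussIncr c₁ hc₁gt, hB.cont] with ω hgood hcont
  obtain ⟨M₀, hM₀⟩ := hgood
  set N : ℕ := max N₁ M₀ + 1 with hNdef
  refine ⟨K * ((2:ℝ)^N)⁻¹, by positivity, ?_⟩
  intro h hh hhK t ht ht1
  -- define the level n
  have hhK' : h < K := by
    calc h < K * ((2:ℝ)^N)⁻¹ := hhK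
      _ ≤ K * 1 := by
        apply mul_le_mul_of_nonneg_left _ hKpos.le
        rw [inv_le_one_iff₀]
        right; exact one_le_pow₀ (by norm_num)
      _ = K := mul_one K
  have hKh1 : 1 < K/h := (one_lt_div hh).2 hhK'
  set n : ℕ := ⌈Real.logb 2 (K/h)⌉₊ with hndef
  have hlogb_nonneg : 0 ≤ Real.logb 2 (K/h) := Real.logb_nonneg (by norm_num) hKh1.le
  -- n ≥ N
  have hnN : N ≤ n := by
    have h1 : (2:ℝ)^(N:ℕ) < K/h := by
      rw [lt_div_iff₀ hh]
      calc (2:ℝ)^N * h < 2^N * (K * ((2:ℝ)^N)⁻¹) := by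
            apply mul_lt_mul_of_pos_left hhK (by positivity)
        _ = K := by field_simp
    have h2 : (N:ℝ) < Real.logb 2 (K/h) := by
      calc (N:ℝ) = Real.logb 2 ((2:ℝ)^(N:ℕ)) := by
            rw [← Real.rpow_natCast 2 N, Real.logb_rpow (by norm_num) (by norm_num)]
        _ < Real.logb 2 (K/h) := by
            apply Real.logb_lt_logb (by norm_num) (by positivity) h1
    have h3 : (N:ℝ) < (n:ℝ) := h2.trans_le (Nat.le_ceil _)
    exact_mod_cast h3.le
  have hnN₁ : N₁ ≤ n := le_trans (le_trans (le_max_left _ _) (Nat.le_succ _)) hnN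
  have hnM₀ : M₀ ≤ n := le_trans (le_trans (le_max_right _ _) (Nat.le_succ _)) hnN
  obtain ⟨⟨hcond2, hcond3, hcond4⟩, hn3⟩ := hN₁ n hnN₁
  -- relation between h and 2^n
  have hK2n : K * ((2:ℝ)^n)⁻¹ ≤ h := by
    have h1 : Real.logb 2 (K/h) ≤ (n:ℝ) := Nat.le_ceil _
    have h2 : K/h ≤ (2:ℝ)^n := by
      calc K/h = (2:ℝ) ^ (Real.logb 2 (K/h)) :=
            (Real.rpow_logb (by norm_num) (by norm_num) (by positivity)).symm
        _ ≤ (2:ℝ) ^ ((n:ℝ) : ℝ) := Real.rpow_le_rpow_of_exponent_le (by norm_num) h1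
        _ = (2:ℝ)^n := by rw [Real.rpow_natCast]
    rw [div_le_iff₀ hh] at h2
    calc K * ((2:ℝ)^n)⁻¹ ≤ ((2:ℝ)^n * h) * ((2:ℝ)^n)⁻¹ := by
          apply mul_le_mul_of_nonneg_right h2 (by positivity)
      _ = h := by field_simp
  have hh2K : h * (2:ℝ)^n < 2*K := by
    have h1 : (n:ℝ) < Real.logb 2 (K/h) + 1 := Nat.ceil_lt_add_one hlogb_nonneg
    have h2 : (2:ℝ)^(n:ℕ) < (K/h) * 2 := by
      calc (2:ℝ)^(n:ℕ) = (2:ℝ) ^ ((n:ℝ):ℝ) := by rw [Real.rpow_natCast]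
        _ < (2:ℝ) ^ (Real.logb 2 (K/h) + 1) :=
            Real.rpow_lt_rpow_of_exponent_lt (by norm_num) h1
        _ = (K/h) * 2 := by
            rw [Real.rpow_add (by norm_num), Real.rpow_one,
              Real.rpow_logb (by norm_num) (by norm_num) (by positivity)]
    calc h * (2:ℝ)^n < h * ((K/h) * 2) := by
          apply mul_lt_mul_of_pos_left h2 hh
      _ = 2*K := by field_simp
  have h2npos : (0:ℝ) < (2:ℝ)^n := by positivity
  have hlt2K : h < 2*K*((2:ℝ)^n)⁻¹ := by
    have := (lt_div_iff₀ h2npos).2 hh2K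
    rwa [div_eq_mul_inv] at this
  have hhe : h ≤ (Real.exp 1)⁻¹ := hlt2K.le.trans hcond3
  have hlogh_half : (n:ℝ)/2 ≤ Real.log (1/h) := by
    have hfrac_pos : (0:ℝ) < (2:ℝ)^n / (2*K) := by positivity
    have h1 : (2:ℝ)^n / (2*K) ≤ 1/h := by
      rw [div_le_div_iff₀ (by positivity) hh]
      have : h * 2^n = 2^n * h := mul_comm _ _
      linarith
    have h2 : Real.log ((2:ℝ)^n / (2*K)) ≤ Real.log (1/h) :=
      Real.log_le_log hfrac_pos h1
    have h3 : Real.log ((2:ℝ)^n / (2*K)) = (n:ℝ) * Real.log 2 - Real.log (2*K) := by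
      rw [Real.log_div (by positivity) (by positivity), Real.log_pow]
    linarith
  have hlogh_pos : 0 < Real.log (1/h) := by
    have : (0:ℝ) < (n:ℝ)/2 := by
      have : (3:ℝ) ≤ (n:ℝ) := by exact_mod_cast hn3
      linarith
    linarith
  -- dyadic endpoints
  set a : ℕ := ⌈t * 2^n⌉₊ with hadef
  set b : ℕ := ⌊(t+h) * 2^n⌋₊ with hbdef
  have ea1 : t * 2^n ≤ (a:ℝ) := Nat.le_ceil _
  have ea2 : (a:ℝ) < t * 2^n + 1 := Nat.ceil_lt_add_one (by positivity)
  have eb1 : (b:ℝ) ≤ (t+h) * 2^n := Nat.floor_le (by positivity)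
  have eb2 : (t+h) * 2^n - 1 < (b:ℝ) := Nat.sub_one_lt_floor _
  have hK2n' : K ≤ h * 2^n := by
    have := mul_le_mul_of_nonneg_right hK2n h2npos.le
    calc K = K * ((2:ℝ)^n)⁻¹ * 2^n := by field_simp
      _ ≤ h * 2^n := this
  have hexp : (t+h) * 2^n = t * 2^n + h * 2^n := by ring
  have hab : a < b := by
    have : (a:ℝ) < (b:ℝ) := by linarith
    exact_mod_cast this
  set l : ℕ := b - a with hldef
  have hl_cast : (l:ℝ) = (b:ℝ) - (a:ℝ) := by
    rw [hldef, Nat.cast_sub hab.le]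
  have hl1 : 1 ≤ l := by omega
  have hl_le_h2n : (l:ℝ) ≤ h * 2^n := by rw [hl_cast]; linarith
  have hl_le_nsq : l ≤ n^2 := by
    have h1 : (l:ℝ) ≤ (n:ℝ)^2 := by linarith
    have : (l:ℝ) ≤ ((n^2 : ℕ):ℝ) := by push_cast; exact h1
    exact_mod_cast this
  have ha2n : a < 2^n + 1 := by
    have hexp2 : t * 2^n ≤ (1-h) * 2^n :=
      mul_le_mul_of_nonneg_right ht1 h2npos.le
    have hexp3 : (1-h) * 2^n = 2^n - h * 2^n := by ring
    have h1 : (a:ℝ) < ((2:ℝ)^n) + 1 := by linarith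
    have : (a:ℝ) < (((2^n + 1) : ℕ) : ℝ) := by push_cast; linarith
    exact_mod_cast this
  set s : ℝ := (l:ℝ)/2^n with hsdef
  have hs_pos : 0 < s := by
    rw [hsdef]
    have : (1:ℝ) ≤ (l:ℝ) := by exact_mod_cast hl1
    positivity
  have hs_le_h : s ≤ h := by
    rw [hsdef, div_le_iff₀ h2npos]
    exact hl_le_h2n
  -- good events
  have hfine : ∀ j : ℕ, n ≤ j → ∀ k : ℕ, k < 2^j →
      |B (((k:ℝ)+1)/2^j) ω - B ((k:ℝ)/2^j) ω| < 2 * Real.sqrt ((j:ℝ) * ((2:ℝ)^j)⁻¹) := by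
    intro j hj k hk
    have hbad := (hM₀ j (le_trans hnM₀ hj)).1
    rw [badF] at hbad
    simp only [Set.mem_iUnion, Set.mem_setOf_eq, not_exists, not_le] at hbad
    exact hbad k (Finset.mem_range.2 hk)
  have hmain : |B ((b:ℝ)/2^n) ω - B ((a:ℝ)/2^n) ω|
      < c₁ * Real.sqrt (s * Real.log (1/s)) := by
    have hbad := (hM₀ n hnM₀).2
    rw [badM] at hbad
    simp only [Set.mem_iUnion, Set.mem_setOf_eq, not_exists, not_le] at hbad
    have := hbad a (Finset.mem_range.2 ha2n) l (Finset.mem_Icc.2 ⟨hl1, hl_le_nsq⟩)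
    have hba : ((a:ℝ)+(l:ℝ)) = (b:ℝ) := by rw [hl_cast]; ring
    rw [hba] at this
    exact this
  -- chaining bounds
  set S : ℝ := Real.sqrt ((n:ℝ) * ((2:ℝ)^n)⁻¹) with hSdef
  have hcontt : ContinuousWithinAt (fun u => B u ω) (Ici 0) t :=
    hcont.continuousWithinAt (by exact ht)
  have hcontth : ContinuousWithinAt (fun u => B u ω) (Ici 0) (t+h) :=
    hcont.continuousWithinAt (by simp only [mem_Ici]; linarith)
  have hinv_small : ((2:ℝ)^n)⁻¹ ≤ h := by
    calc ((2:ℝ)^n)⁻¹ = 1 * ((2:ℝ)^n)⁻¹ := (one_mul _).symm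
      _ ≤ K * ((2:ℝ)^n)⁻¹ := by
        apply mul_le_mul_of_nonneg_right (by linarith) (by positivity)
      _ ≤ h := hK2n
  have hceil : |B ((a:ℝ)/2^n) ω - B t ω| ≤ 11 * S := by
    rw [hSdef]
    exact chain_ceil (fun u => B u ω) n hn3 t ht (by linarith) hcontt hfine
  have hfloor : |B ((b:ℝ)/2^n) ω - B (t+h) ω| ≤ 11 * S := by
    rw [hSdef]
    exact chain_floor (fun u => B u ω) n hn3 (t+h) (by linarith) (by linarith) hcontth hfine
  -- main comparison
  set L : ℝ := Real.sqrt (h * Real.log (1/h)) with hLdef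
  have hLnn : 0 ≤ L := Real.sqrt_nonneg _
  have hmain2 : c₁ * Real.sqrt (s * Real.log (1/s)) ≤ c₁ * L := by
    apply mul_le_mul_of_nonneg_left _ hc₁pos.le
    rw [hLdef]
    exact Real.sqrt_le_sqrt (xlog_mono hs_pos hs_le_h hhe)
  have hScomp : 22 * S ≤ δ * L := by
    have h1 : K * ((2:ℝ)^n)⁻¹ * ((n:ℝ)/2) ≤ h * Real.log (1/h) := by
      apply mul_le_mul hK2n hlogh_half (by positivity) hh.le
    have h2 : 484 * ((n:ℝ) * ((2:ℝ)^n)⁻¹) ≤ δ^2 * (h * Real.log (1/h)) := by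
      have h3 : δ^2 * (K * ((2:ℝ)^n)⁻¹ * ((n:ℝ)/2)) ≤ δ^2 * (h * Real.log (1/h)) := by
        apply mul_le_mul_of_nonneg_left h1 (by positivity)
      have h4 : 484 * ((n:ℝ) * ((2:ℝ)^n)⁻¹) ≤ δ^2 * (K * ((2:ℝ)^n)⁻¹ * ((n:ℝ)/2)) := by
        have h5 := mul_le_mul_of_nonneg_right hKδ
          (show (0:ℝ) ≤ ((n:ℝ) * ((2:ℝ)^n)⁻¹)/2 by positivity)
        calc 484 * ((n:ℝ) * ((2:ℝ)^n)⁻¹) = 968 * (((n:ℝ) * ((2:ℝ)^n)⁻¹)/2) := by ring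
          _ ≤ δ^2*K * (((n:ℝ) * ((2:ℝ)^n)⁻¹)/2) := h5
          _ = δ^2 * (K * ((2:ℝ)^n)⁻¹ * ((n:ℝ)/2)) := by ring
      linarith
    calc 22 * S = Real.sqrt (484 * ((n:ℝ) * ((2:ℝ)^n)⁻¹)) := by
          rw [hSdef, Real.sqrt_mul (by norm_num : (0:ℝ) ≤ 484), show (484:ℝ) = 22^2 by norm_num,
            Real.sqrt_sq (by norm_num : (0:ℝ) ≤ 22)]
      _ ≤ Real.sqrt (δ^2 * (h * Real.log (1/h))) := Real.sqrt_le_sqrt h2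
      _ = δ * L := by
          rw [hLdef, Real.sqrt_mul (sq_nonneg δ), Real.sqrt_sq hδpos.le]
  -- final triangle inequality
  have htri : |B (t+h) ω - B t ω| ≤ |B (t+h) ω - B ((b:ℝ)/2^n) ω|
      + |B ((b:ℝ)/2^n) ω - B ((a:ℝ)/2^n) ω| + |B ((a:ℝ)/2^n) ω - B t ω| := by
    calc |B (t+h) ω - B t ω|
        = |(B (t+h) ω - B ((b:ℝ)/2^n) ω) + ((B ((b:ℝ)/2^n) ω - B ((a:ℝ)/2^n) ω)
            + (B ((a:ℝ)/2^n) ω - B t ω))| := by ring_nf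
      _ ≤ |B (t+h) ω - B ((b:ℝ)/2^n) ω| + |(B ((b:ℝ)/2^n) ω - B ((a:ℝ)/2^n) ω)
            + (B ((a:ℝ)/2^n) ω - B t ω)| := abs_add_le _ _
      _ ≤ _ := by
          have := abs_add_le (B ((b:ℝ)/2^n) ω - B ((a:ℝ)/2^n) ω) (B ((a:ℝ)/2^n) ω - B t ω)
          linarith
  have hfloor' : |B (t+h) ω - B ((b:ℝ)/2^n) ω| ≤ 11 * S := by
    rw [abs_sub_comm]; exact hfloor
  calc |B (t + h) ω - B t ω|
      ≤ |B (t+h) ω - B ((b:ℝ)/2^n) ω| + |B ((b:ℝ)/2^n) ω - B ((a:ℝ)/2^n) ω|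
        + |B ((a:ℝ)/2^n) ω - B t ω| := htri
    _ < 11 * S + c₁ * Real.sqrt (s * Real.log (1/s)) + 11 * S := by
        have := hmain
        linarith
    _ ≤ 22 * S + c₁ * L := by linarith
    _ ≤ δ * L + c₁ * L := by linarith
    _ = c * L := by rw [hδdef]; ring
end

section
/- Let B be a standard one-dimensional Brownian motion started at 0. Almost surely, for all rationals 0 < a < b, if B has a zero in the interval [a,b], then there exist x, y ∈ [a,b] such that B(x) > 0 and B(y) < 0 (i.e., every zero in an interval bounded away from the origin is accompanied by a sign change on that interval). -/
open MeasureTheory ProbabilityTheory Set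

lemma bm_core {Ω : Type} [MeasurableSpace Ω] (P : Measure Ω) [IsProbabilityMeasure P]
    (X : Ω → ℝ) (Y : Ω → ℕ → ℝ) (hX : Measurable X) (hY : Measurable Y)
    (h : IndepFun X Y P) (hatom : ∀ c : ℝ, P (X ⁻¹' {c}) = 0) :
    P {ω | (∀ n, X ω + Y ω n ≤ 0) ∧ ∀ k : ℕ, ∃ n, -(1/(k+1:ℝ)) < X ω + Y ω n} = 0 := by
  set A : Set (ℝ × (ℕ → ℝ)) :=
    {p | (∀ n, p.1 + p.2 n ≤ 0) ∧ ∀ k : ℕ, ∃ n, -(1/(k+1:ℝ)) < p.1 + p.2 n} with hAdef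
  have hmeas : ∀ n : ℕ, Measurable fun p : ℝ × (ℕ → ℝ) => p.1 + p.2 n := fun n =>
    measurable_fst.add ((measurable_pi_apply n).comp measurable_snd)
  have hA : MeasurableSet A := by
    have : A = (⋂ n, {p : ℝ × (ℕ → ℝ) | p.1 + p.2 n ≤ 0}) ∩
        ⋂ k : ℕ, ⋃ n, {p : ℝ × (ℕ → ℝ) | -(1/(k+1:ℝ)) < p.1 + p.2 n} := by
      ext p; simp [hAdef, Set.mem_iInter, Set.mem_iUnion]
    rw [this]
    exact (MeasurableSet.iInter fun n =>
        measurableSet_le (hmeas n) measurable_const).inter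
      (MeasurableSet.iInter fun k => MeasurableSet.iUnion fun n =>
        measurableSet_lt measurable_const (hmeas n))
  have hmap : P.map (fun ω => (X ω, Y ω)) = (P.map X).prod (P.map Y) :=
    (indepFun_iff_map_prod_eq_prod_map_map hX.aemeasurable hY.aemeasurable).mp h
  have hev : {ω | (∀ n, X ω + Y ω n ≤ 0) ∧ ∀ k : ℕ, ∃ n, -(1/(k+1:ℝ)) < X ω + Y ω n}
      = (fun ω => (X ω, Y ω)) ⁻¹' A := rfl
  rw [hev, ← Measure.map_apply (hX.prodMk hY) hA, hmap,
    Measure.prod_apply_symm hA]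
  have hslice : ∀ y : ℕ → ℝ, (P.map X) ((fun x => (x, y)) ⁻¹' A) = 0 := by
    intro y
    have hsub : ((fun x => (x, y)) ⁻¹' A) ⊆ {-sSup (Set.range y)} := by
      intro x hx
      obtain ⟨h1, h2⟩ := hx
      have hbdd : BddAbove (Set.range y) := by
        refine ⟨-x, ?_⟩
        rintro r ⟨n, rfl⟩
        linarith [h1 n]
      have hle : sSup (Set.range y) ≤ -x :=
        csSup_le (Set.range_nonempty y) (by rintro r ⟨n, rfl⟩; linarith [h1 n])
      have hge : -x ≤ sSup (Set.range y) := by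
        refine le_of_forall_pos_lt_add fun ε hε => ?_
        obtain ⟨k, hk⟩ := exists_nat_one_div_lt hε
        obtain ⟨n, hn⟩ := h2 k
        have : -x - 1/(k+1:ℝ) < y n := by linarith
        have hyn : y n ≤ sSup (Set.range y) := le_csSup hbdd (Set.mem_range_self n)
        linarith
      simp [Set.mem_singleton_iff]
      linarith
    refine le_antisymm ?_ zero_le
    calc (P.map X) ((fun x => (x, y)) ⁻¹' A) ≤ (P.map X) {-sSup (Set.range y)} :=
          measure_mono hsub
      _ = 0 := by rw [Measure.map_apply hX (measurableSet_singleton _)]; exact hatom _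
  simp [hslice]


lemma bm_indep_fin {Ω : Type} [MeasurableSpace Ω] (P : Measure Ω) (B : ℝ → Ω → ℝ)
    (hB : IsStdBM P B) (a : ℝ) (ha : 0 ≤ a) (e : ℕ → ℝ) (he : ∀ n, a ≤ e n) (k : ℕ) :
    IndepFun (B a) (fun ω (i : Fin k) => B (e i) ω - B a ω) P := by
  classical
  set l : List ℝ := List.insertionSort (· ≤ ·) (List.ofFn fun i : Fin k => e i) with hl
  have hlen : l.length = k := by
    rw [hl, (List.perm_insertionSort _ _).length_eq, List.length_ofFn]
  have hsortl : l.Pairwise (· ≤ ·) := List.pairwise_insertionSort _ _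
  have hmeml : ∀ x ∈ l, a ≤ x := by
    intro x hx
    rw [hl, List.mem_insertionSort, List.mem_ofFn] at hx
    obtain ⟨i, rfl⟩ := hx
    exact he i
  set L : List ℝ := 0 :: a :: l with hLdef
  have hLlen : L.length = k + 2 := by simp [hLdef, hlen]
  have hLs : L.Pairwise (· ≤ ·) := by
    rw [hLdef, List.pairwise_cons]
    constructor
    · intro x hx
      rcases List.mem_cons.mp hx with h | h
      · exact h ▸ ha
      · exact ha.trans (hmeml x h)
    · rw [List.pairwise_cons]
      exact ⟨hmeml, hsortl⟩
  set t : Fin (k + 2) → ℝ := fun i => L.getD i 0 with ht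
  have hmono : Monotone t := by
    intro i j hij
    have hi : (i : ℕ) < L.length := by rw [hLlen]; exact i.isLt
    have hj : (j : ℕ) < L.length := by rw [hLlen]; exact j.isLt
    rw [ht]
    simp only
    rw [List.getD_eq_get _ _ ⟨i, hi⟩, List.getD_eq_get _ _ ⟨j, hj⟩]
    exact hLs.rel_get_of_le (by exact_mod_cast hij)
  have hLnn : ∀ x ∈ L, 0 ≤ x := by
    intro x hx
    rcases List.mem_cons.mp hx with h | h
    · exact le_of_eq h.symm
    · rcases List.mem_cons.mp h with h2 | h2
      · exact h2 ▸ ha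
      · exact ha.trans (hmeml x h2)
  have hpos : ∀ i, 0 ≤ t i := by
    intro i
    have hi : (i : ℕ) < L.length := by rw [hLlen]; exact i.isLt
    rw [ht]
    simp only
    rw [List.getD_eq_get _ _ ⟨i, hi⟩]
    exact hLnn _ (List.get_mem _ _)
  have hInd := hB.indepIncr (k + 1) t hmono hpos
  set incr : Fin (k + 1) → Ω → ℝ :=
    fun i ω => B (t i.succ) ω - B (t i.castSucc) ω with hincr
  set S : Finset (Fin (k + 1)) := {0} with hS
  set T : Finset (Fin (k + 1)) := {0}ᶜ with hT
  have hd : Disjoint S T := by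
    rw [hS, hT]
    exact disjoint_compl_right
  have himeas : ∀ i, Measurable (incr i) := fun i => (hB.meas _).sub (hB.meas _)
  have hIF := hInd.indepFun_finset S T hd himeas
  have h0S : (0 : Fin (k+1)) ∈ S := Finset.mem_singleton_self 0
  set φ : (∀ _ : {x // x ∈ S}, ℝ) → ℝ := fun v => v ⟨0, h0S⟩ with hφdef
  have hφ : Measurable φ := measurable_pi_apply _
  set ψ : (∀ _ : {x // x ∈ T}, ℝ) → (Fin k → ℝ) := fun v i =>
    ∑ j ∈ Finset.range (l.idxOf (e i) + 1),
      if h : j + 1 < k + 1 then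
        (if h2 : (⟨j + 1, h⟩ : Fin (k+1)) ∈ T then v ⟨⟨j + 1, h⟩, h2⟩ else 0)
      else 0 with hψdef
  have hψ : Measurable ψ := by
    refine measurable_pi_lambda _ fun i => Finset.measurable_sum _ fun j _ => ?_
    by_cases h : j + 1 < k + 1
    · simp only [dif_pos h]
      by_cases h2 : (⟨j + 1, h⟩ : Fin (k+1)) ∈ T
      · simp only [dif_pos h2]
        exact measurable_pi_apply _
      · simp only [dif_neg h2]
        exact measurable_const
    · simp only [dif_neg h]
      exact measurable_const
  have hcomp := hIF.comp hφ hψ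
  -- identify left function
  have hleft : (φ ∘ fun ω (i : {x // x ∈ S}) => incr i ω) = fun ω => B a ω - B 0 ω := by
    funext ω
    have h1 : t (0 : Fin (k+1)).succ = a := by
      rw [ht]; simp [hLdef]
    have h0 : t (0 : Fin (k+1)).castSucc = 0 := by
      rw [ht]; simp [hLdef]
    simp only [Function.comp_apply, hφdef, hincr, h1, h0]
  -- identify right function
  have hright : (ψ ∘ fun ω (i : {x // x ∈ T}) => incr i ω)
      = fun ω (i : Fin k) => B (e i) ω - B a ω := by
    funext ω i
    have hmem : e i ∈ l := by
      rw [hl, List.mem_insertionSort, List.mem_ofFn]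
      exact ⟨i, rfl⟩
    set m : ℕ := l.idxOf (e i) with hm
    have hmk : m < k := by
      have h2 := List.idxOf_lt_length_iff.mpr hmem
      rw [hlen] at h2
      exact h2
    have key : ∀ j ∈ Finset.range (m + 1),
        (if h : j + 1 < k + 1 then
          (if h2 : (⟨j + 1, h⟩ : Fin (k+1)) ∈ T then incr ⟨j + 1, h⟩ ω else 0)
         else 0)
        = B (L.getD (j + 2) 0) ω - B (L.getD (j + 1) 0) ω := by
      intro j hj
      rw [Finset.mem_range] at hj
      have hjk : j + 1 < k + 1 := by omega
      have hjT : (⟨j + 1, hjk⟩ : Fin (k+1)) ∈ T := by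
        rw [hT, Finset.mem_compl, Finset.mem_singleton]
        exact fun hc => by simpa using congrArg Fin.val hc
      rw [dif_pos hjk, dif_pos hjT, hincr]
      simp only [Fin.succ, Fin.castSucc, Fin.castAdd, Fin.castLE, ht]
    have hsum : (ψ (fun (i : {x // x ∈ T}) => incr i ω)) i
        = ∑ j ∈ Finset.range (m + 1),
            (B (L.getD (j + 2) 0) ω - B (L.getD (j + 1) 0) ω) := by
      rw [hψdef]
      exact Finset.sum_congr rfl key
    have htel : ∑ j ∈ Finset.range (m + 1),
        (B (L.getD (j + 2) 0) ω - B (L.getD (j + 1) 0) ω)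
        = B (L.getD (m + 2) 0) ω - B (L.getD 1 0) ω := by
      exact Finset.sum_range_sub (fun j => B (L.getD (j + 1) 0) ω) (m + 1)
    have hget : L.getD (m + 2) 0 = e i := by
      have hml : m < l.length := List.idxOf_lt_length_iff.mpr hmem
      rw [hLdef]
      show (0 :: a :: l).getD (m+2) 0 = e i
      rw [List.getD_cons_succ, List.getD_cons_succ, List.getD_eq_getElem _ _ hml]
      exact List.getElem_idxOf hml
    have h1 : L.getD 1 0 = a := by rw [hLdef]; rfl
    simp only [Function.comp_apply]
    rw [hsum, htel, hget, h1]
  rw [hleft, hright] at hcomp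
  have haeq : (fun ω => B a ω - B 0 ω) =ᵐ[P] B a := by
    filter_upwards [hB.start] with ω h0
    rw [h0, sub_zero]
  exact IndepFun.congr hcomp haeq (Filter.EventuallyEq.refl _ _)

lemma bm_indep {Ω : Type} [MeasurableSpace Ω] (P : Measure Ω) (B : ℝ → Ω → ℝ)
    (hB : IsStdBM P B) (a : ℝ) (ha : 0 ≤ a) (e : ℕ → ℝ) (he : ∀ n, a ≤ e n) :
    IndepFun (B a) (fun ω (n : ℕ) => B (e n) ω - B a ω) P := by
  haveI := hB.isProb
  set Y : ℕ → Ω → ℝ := fun n ω => B (e n) ω - B a ω with hY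
  have hYm : ∀ n, Measurable (Y n) := fun n => (hB.meas _).sub (hB.meas _)
  set mY : ℕ → MeasurableSpace Ω :=
    fun n => MeasurableSpace.comap (Y n) inferInstance with hmY
  set m : ℕ → MeasurableSpace Ω := fun k => ⨆ n, ⨆ _ : n < k, mY n with hm
  have hYle : ∀ n, mY n ≤ ‹MeasurableSpace Ω› := fun n => (hYm n).comap_le
  have h_le : ∀ k, m k ≤ ‹MeasurableSpace Ω› :=
    fun k => iSup_le fun n => iSup_le fun _ => hYle n
  have h_le' : MeasurableSpace.comap (B a) inferInstance ≤ ‹MeasurableSpace Ω› :=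
    (hB.meas a).comap_le
  have hmon : Monotone m := by
    intro k1 k2 hk
    exact iSup_le fun n => iSup_le fun hn => le_iSup₂ (f := fun n (_ : n < k2) => mY n)
      n (lt_of_lt_of_le hn hk)
  have hfin : ∀ k, Indep (m k) (MeasurableSpace.comap (B a) inferInstance) P := by
    intro k
    have h1 := bm_indep_fin P B hB a ha e he k
    rw [IndepFun_iff_Indep] at h1
    refine indep_of_indep_of_le_left h1.symm ?_
    refine iSup_le fun n => iSup_le fun hn => ?_
    have heq : Y n = (fun v : Fin k → ℝ => v ⟨n, hn⟩) ∘
        (fun ω (i : Fin k) => B (e i) ω - B a ω) := rfl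
    rw [hmY]
    simp only
    rw [heq, ← MeasurableSpace.comap_comp]
    exact MeasurableSpace.comap_mono (measurable_pi_apply _).comap_le
  have hsup : Indep (⨆ k, m k) (MeasurableSpace.comap (B a) inferInstance) P :=
    indep_iSup_of_monotone hfin h_le h_le' hmon
  have hsup_eq : (⨆ k, m k) = ⨆ n, mY n := by
    apply le_antisymm
    · exact iSup_le fun k => iSup_le fun n => iSup_le fun _ => le_iSup mY n
    · exact iSup_le fun n => le_trans
        (le_iSup₂ (f := fun n' (_ : n' < n + 1) => mY n') n (Nat.lt_succ_self n))
        (le_iSup m (n + 1))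
  rw [IndepFun_iff_Indep]
  have hcpi : MeasurableSpace.comap (fun ω n => Y n ω)
      (MeasurableSpace.pi : MeasurableSpace (ℕ → ℝ)) = ⨆ n, mY n := by
    have hpi : (MeasurableSpace.pi : MeasurableSpace (ℕ → ℝ))
        = ⨆ n : ℕ, MeasurableSpace.comap (fun v : ℕ → ℝ => v n) inferInstance := rfl
    rw [hpi, MeasurableSpace.comap_iSup]
    congr 1
    funext n
    rw [MeasurableSpace.comap_comp]
    rfl
  exact (indep_of_indep_of_le_left (hsup_eq ▸ hsup) (le_of_eq hcpi)).symm


lemma bm_atom {Ω : Type} [MeasurableSpace Ω] (P : Measure Ω) (B : ℝ → Ω → ℝ)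
    (hB : IsStdBM P B) (a : ℝ) (ha : 0 < a) (c : ℝ) : P (B a ⁻¹' {c}) = 0 := by
  have hg := hB.gaussIncr 0 a le_rfl ha
  have hmap : P.map (B a) = gaussianReal 0 a.toNNReal := by
    rw [← hg]
    apply Measure.map_congr
    filter_upwards [hB.start] with ω h0
    rw [zero_add, h0, sub_zero]
  have hva : a.toNNReal ≠ 0 := by
    simp only [ne_eq, Real.toNNReal_eq_zero, not_le]
    exact ha
  have h2 : P.map (B a) {c} = 0 := by
    rw [hmap]
    exact gaussianReal_absolutelyContinuous 0 hva (Real.volume_singleton)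
  rwa [Measure.map_apply (hB.meas a) (measurableSet_singleton c)] at h2

/-- Almost surely, for all rationals `0 < a < b`, if `B` has a zero in `[a,b]`
then `B` takes both a positive and a negative value on `[a,b]`. -/
theorem stmt_11 {Ω : Type} [MeasurableSpace Ω] (P : Measure Ω) (B : ℝ → Ω → ℝ)
    (hB : IsStdBM P B) :
    ∀ᵐ ω ∂P, ∀ a b : ℚ, 0 < a → a < b →
      (∃ t ∈ Icc (a : ℝ) (b : ℝ), B t ω = 0) →
      (∃ x ∈ Icc (a : ℝ) (b : ℝ), 0 < B x ω) ∧
      (∃ y ∈ Icc (a : ℝ) (b : ℝ), B y ω < 0) := by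
  haveI := hB.isProb
  rw [ae_all_iff]
  intro a
  rw [ae_all_iff]
  intro b
  by_cases hab : 0 < a ∧ a < b
  swap
  · filter_upwards with ω ha hb
    exact absurd ⟨ha, hb⟩ hab
  obtain ⟨ha, hab⟩ := hab
  have ha0R : (0:ℝ) < (a:ℝ) := by exact_mod_cast ha
  have habR : (a:ℝ) < (b:ℝ) := by exact_mod_cast hab
  -- enumeration of rationals in [a,b]
  obtain ⟨f, hf⟩ := exists_surjective_nat ℚ
  classical
  set e : ℕ → ℝ := fun n =>
    if a ≤ f n ∧ f n ≤ b then ((f n : ℚ) : ℝ) else (a:ℝ) with he_def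
  have he_of_mem : ∀ (q : ℚ), a ≤ q → q ≤ b → ∀ n, f n = q → e n = (q:ℝ) := by
    intro q h1 h2 n hn
    simp only [he_def, hn]
    rw [if_pos ⟨h1, h2⟩]
  have heIcc : ∀ n, e n ∈ Icc (a:ℝ) (b:ℝ) := by
    intro n
    simp only [he_def]
    by_cases h : a ≤ f n ∧ f n ≤ b
    · rw [if_pos h]
      exact ⟨by exact_mod_cast h.1, by exact_mod_cast h.2⟩
    · rw [if_neg h]
      exact ⟨le_refl _, habR.le⟩
  have hea : ∀ n, (a:ℝ) ≤ e n := fun n => (heIcc n).1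
  have hdense : ∀ t : ℝ, t ∈ Icc (a:ℝ) (b:ℝ) → ∀ ε : ℝ, 0 < ε → ∃ n, |e n - t| < ε := by
    intro t ht ε hε
    by_cases hcase : t - ε < a
    · obtain ⟨n, hn⟩ := hf a
      refine ⟨n, ?_⟩
      have : e n = (a:ℝ) := he_of_mem a (le_refl a) hab.le n hn
      rw [this, abs_lt]
      constructor <;> [linarith [ht.1]; linarith [ht.1]]
    · push_neg at hcase
      obtain ⟨q, hq1, hq2⟩ := exists_rat_btwn (show t - ε < t by linarith)
      have hqa : a ≤ q := by
        have : (a:ℝ) ≤ (q:ℝ) := le_trans hcase hq1.le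
        exact_mod_cast this
      have hqb : q ≤ b := by
        have : (q:ℝ) ≤ (b:ℝ) := le_trans hq2.le ht.2
        exact_mod_cast this
      obtain ⟨n, hn⟩ := hf q
      refine ⟨n, ?_⟩
      have heq : e n = (q:ℝ) := he_of_mem q hqa hqb n hn
      rw [heq, abs_lt]
      constructor <;> linarith
  -- measurability and independence
  have hX : Measurable (B (a:ℝ)) := hB.meas _
  set Y : Ω → ℕ → ℝ := fun ω n => B (e n) ω - B (a:ℝ) ω with hYdef
  have hY : Measurable Y := measurable_pi_lambda _ fun n => (hB.meas _).sub (hB.meas _)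
  have hind : IndepFun (B (a:ℝ)) Y P := bm_indep P B hB (a:ℝ) ha0R.le e hea
  have hatom : ∀ c : ℝ, P (B (a:ℝ) ⁻¹' {c}) = 0 := bm_atom P B hB (a:ℝ) ha0R
  -- positive-side event
  have hpos0 := bm_core P (B (a:ℝ)) Y hX hY hind hatom
  have hpos0' : P {ω | (∀ n, B (e n) ω ≤ 0) ∧
      ∀ k : ℕ, ∃ n, -(1/(k+1:ℝ)) < B (e n) ω} = 0 := by
    have hset : {ω | (∀ n, B (e n) ω ≤ 0) ∧ ∀ k : ℕ, ∃ n, -(1/(k+1:ℝ)) < B (e n) ω}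
        = {ω | (∀ n, B (a:ℝ) ω + Y ω n ≤ 0) ∧
            ∀ k : ℕ, ∃ n, -(1/(k+1:ℝ)) < B (a:ℝ) ω + Y ω n} := by
      ext ω
      have harith : ∀ n, B (a:ℝ) ω + Y ω n = B (e n) ω := fun n => by
        rw [hYdef]; ring
      simp only [Set.mem_setOf_eq, harith]
    rw [hset]
    exact hpos0
  -- negative-side event
  set X' : Ω → ℝ := fun ω => -(B (a:ℝ) ω) with hX'def
  set Y' : Ω → ℕ → ℝ := fun ω n => -(Y ω n) with hY'def
  have hX'm : Measurable X' := hX.neg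
  have hY'm : Measurable Y' := measurable_pi_lambda _ fun n =>
    ((measurable_pi_apply n).comp hY).neg
  have hind' : IndepFun X' Y' P := by
    have := hind.comp (measurable_neg : Measurable (fun x : ℝ => -x))
      (measurable_pi_lambda (fun (v : ℕ → ℝ) n => -(v n)) fun n =>
        (measurable_pi_apply n).neg)
    exact this
  have hatom' : ∀ c : ℝ, P (X' ⁻¹' {c}) = 0 := by
    intro c
    have : X' ⁻¹' {c} = B (a:ℝ) ⁻¹' {-c} := by
      ext ω
      simp only [Set.mem_preimage, Set.mem_singleton_iff, hX'def, neg_eq_iff_eq_neg]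
    rw [this]
    exact hatom (-c)
  have hneg0 := bm_core P X' Y' hX'm hY'm hind' hatom'
  have hneg0' : P {ω | (∀ n, 0 ≤ B (e n) ω) ∧
      ∀ k : ℕ, ∃ n, B (e n) ω < 1/(k+1:ℝ)} = 0 := by
    have hset : {ω | (∀ n, 0 ≤ B (e n) ω) ∧ ∀ k : ℕ, ∃ n, B (e n) ω < 1/(k+1:ℝ)}
        = {ω | (∀ n, X' ω + Y' ω n ≤ 0) ∧
            ∀ k : ℕ, ∃ n, -(1/(k+1:ℝ)) < X' ω + Y' ω n} := by
      ext ω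
      have harith : ∀ n, X' ω + Y' ω n = -(B (e n) ω) := fun n => by
        rw [hX'def, hY'def, hYdef]; ring
      simp only [Set.mem_setOf_eq, harith]
      constructor
      · rintro ⟨h1, h2⟩
        exact ⟨fun n => by linarith [h1 n], fun k => by
          obtain ⟨n, hn⟩ := h2 k; exact ⟨n, by linarith⟩⟩
      · rintro ⟨h1, h2⟩
        exact ⟨fun n => by linarith [h1 n], fun k => by
          obtain ⟨n, hn⟩ := h2 k; exact ⟨n, by linarith⟩⟩
    rw [hset]
    exact hneg0
  have hae1 : ∀ᵐ ω ∂P, ω ∉ {ω | (∀ n, B (e n) ω ≤ 0) ∧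
      ∀ k : ℕ, ∃ n, -(1/(k+1:ℝ)) < B (e n) ω} :=
    measure_eq_zero_iff_ae_notMem.mp hpos0'
  have hae2 : ∀ᵐ ω ∂P, ω ∉ {ω | (∀ n, 0 ≤ B (e n) ω) ∧
      ∀ k : ℕ, ∃ n, B (e n) ω < 1/(k+1:ℝ)} :=
    measure_eq_zero_iff_ae_notMem.mp hneg0'
  filter_upwards [hB.cont, hae1, hae2] with ω hcont hnpos hnneg
  intro _ _ hzero
  obtain ⟨t, htI, ht0⟩ := hzero
  have ht0' : (0:ℝ) ≤ t := le_trans ha0R.le htI.1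
  -- small-value rationals near t
  have hsmall : ∀ k : ℕ, ∃ n, |B (e n) ω| < 1/(k+1:ℝ) := by
    intro k
    have hcw : ContinuousWithinAt (fun s => B s ω) (Ici 0) t := hcont t ht0'
    rw [Metric.continuousWithinAt_iff] at hcw
    obtain ⟨δ, hδ, hball⟩ := hcw (1/(k+1:ℝ)) (by positivity)
    obtain ⟨n, hn⟩ := hdense t htI δ hδ
    have hen0 : e n ∈ Ici (0:ℝ) := le_trans ha0R.le (hea n)
    have := hball hen0 (by rw [Real.dist_eq]; exact hn)
    rw [Real.dist_eq, ht0, sub_zero] at this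
    exact ⟨n, this⟩
  constructor
  · by_contra hc
    push_neg at hc
    apply hnpos
    constructor
    · intro n
      exact hc (e n) (heIcc n)
    · intro k
      obtain ⟨n, hn⟩ := hsmall k
      obtain ⟨h1, h2⟩ := abs_lt.mp hn
      exact ⟨n, h1⟩
  · by_contra hc
    push_neg at hc
    apply hnneg
    constructor
    · intro n
      exact hc (e n) (heIcc n)
    · intro k
      obtain ⟨n, hn⟩ := hsmall k
      obtain ⟨h1, h2⟩ := abs_lt.mp hn
      exact ⟨n, h2⟩
end
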